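/- If ∇ is a metric connection on Y with connection symbols Γ and λ is a k-form on Y with ∇λ = 0, then the Nijenhuis–Lie derivative of λ along any M ∈ Λ^p(Y,TY) is L_M(λ) = [d, i_M](λ) = i_{d_θ M}(λ), where d_θ is the exterior covariant derivative on TY with connection one-form θ_a{}^b = Γ_{ac}{}^b dx^c. -/

import Mathlib

open scoped BigOperators

namespace G2S

abbrev Idx : Type := Fin 7

/-- Components of a `k`-form on `Y` (values of the totally antisymmetric
coefficient array at each point of `Y`). -/
abbrev Form (Y : Type) (k : ℕ) : Type := (Fin k → Idx) → Y → ℝ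

noncomputable section

def sgn {n : ℕ} (σ : Equiv.Perm (Fin n)) : ℝ := ((Equiv.Perm.sign σ : ℤ) : ℝ)

/-- The components are totally antisymmetric. -/
def IsAlt {Y : Type} {k : ℕ} (α : Form Y k) : Prop :=
  ∀ (σ : Equiv.Perm (Fin k)) (v : Fin k → Idx), α (v ∘ σ) = sgn σ • α v

/-- Wedge product, in components. -/
def wedge {Y : Type} {k l : ℕ} (α : Form Y k) (β : Form Y l) : Form Y (k + l) :=
  fun v y => (1 / ((k.factorial : ℝ) * (l.factorial : ℝ))) *
    ∑ σ : Equiv.Perm (Fin (k + l)), sgn σ *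
      (α (fun i => v (σ (Fin.castAdd l i))) y * β (fun j => v (σ (Fin.natAdd k j))) y)

/-- `contr α a = α_a`, the `(k-1)`-form obtained by contracting the first index. -/
def contr {Y : Type} {k : ℕ} (α : Form Y (k + 1)) (a : Idx) : Form Y k :=
  fun v => α (Fin.cons a v)

/-- Metric contraction `α ⌟ β` (with the flat metric of an orthonormal frame). -/
def hook {Y : Type} {k m : ℕ} (α : Form Y k) (β : Form Y (k + m)) : Form Y m :=
  fun v y => (1 / (k.factorial : ℝ)) * ∑ w : Fin k → Idx, α w y * β (Fin.append w v) y

/-- Reindex a form along an equality of degrees. -/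
def castF {Y : Type} {k l : ℕ} (h : k = l) (α : Form Y k) : Form Y l :=
  fun v => α (fun i => v (Fin.cast h i))

/-- Insertion operator `i_M(α) = M^a ∧ α_a` of a `TY`-valued `p`-form `M`. -/
def insertF {Y : Type} {p k : ℕ} (M : Idx → Form Y p) (α : Form Y (k + 1)) :
    Form Y (p + k) :=
  fun v y => ∑ a : Idx, wedge (M a) (contr α a) v y

/-- Exterior derivative of a (scalar-valued) form, in components, where
`D f a` denotes the derivative of the function `f` along the `a`-th frame
vector field. -/
def dS {Y : Type} (D : (Y → ℝ) → Idx → Y → ℝ) {k : ℕ} (α : Form Y k) :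
    Form Y (k + 1) :=
  fun v y => ∑ i : Fin (k + 1), ((-1 : ℝ) ^ (i : ℕ)) *
    D (α (fun j => v (i.succAbove j))) (v i) y

/-- The connection one-form `θ_a{}^b = Γ_{ac}{}^b dx^c` associated to the
connection symbols `Γ` (with `Γ a c b = Γ_{ac}{}^b`). -/
def thetaOne {Y : Type} (Γ : Idx → Idx → Idx → Y → ℝ) (a b : Idx) : Form Y 1 :=
  fun v y => Γ a (v 0) b y

/-- Exterior covariant derivative `d_θ` on `TY`-valued forms:
`(d_θ M)^b = d(M^b) + θ_a{}^b ∧ M^a`. -/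
def dTheta {Y : Type} (D : (Y → ℝ) → Idx → Y → ℝ) (Γ : Idx → Idx → Idx → Y → ℝ)
    {p : ℕ} (M : Idx → Form Y p) : Idx → Form Y (p + 1) :=
  fun b => dS D (M b) + castF (show 1 + p = p + 1 by omega)
    ((fun v y => ∑ a : Idx, wedge (thetaOne Γ a b) (M a) v y) : Form Y (1 + p))

/-- Covariant derivative `∇_a` on the components of a `k`-form, determined by
the frame derivations `D` and connection symbols `Γ`. -/
def covD {Y : Type} (D : (Y → ℝ) → Idx → Y → ℝ) (Γ : Idx → Idx → Idx → Y → ℝ)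
    {k : ℕ} (a : Idx) (α : Form Y k) : Form Y k :=
  fun v y => D (α v) a y
    - ∑ j : Fin k, ∑ b : Idx, Γ a (v j) b y * α (Function.update v j b) y

open Equiv Equiv.Perm


lemma sgn_mul {n : ℕ} (σ τ : Perm (Fin n)) : sgn (σ * τ) = sgn σ * sgn τ := by
  simp [sgn, map_mul]

lemma sgn_sq {n : ℕ} (σ : Perm (Fin n)) : sgn σ * sgn σ = 1 := by
  rw [← sgn_mul]
  simp [sgn]

lemma sgn_inv {n : ℕ} (σ : Perm (Fin n)) : sgn σ⁻¹ = sgn σ := by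
  simp [sgn]

/-- Alternation sum. -/
def altS {m : ℕ} (F : (Fin m → Idx) → ℝ) (v : Fin m → Idx) : ℝ :=
  ∑ σ : Perm (Fin m), sgn σ * F (v ∘ σ)

lemma altS_comp_right {m : ℕ} (F : (Fin m → Idx) → ℝ) (τ : Perm (Fin m))
    (v : Fin m → Idx) : altS (fun w => F (w ∘ τ)) v = sgn τ * altS F v := by
  unfold altS
  rw [Finset.mul_sum]
  apply Fintype.sum_equiv (Equiv.mulRight τ)
  intro σ
  simp only [Equiv.coe_mulRight]
  have h1 : (v ∘ σ) ∘ τ = v ∘ (σ * τ) := rfl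
  rw [h1, sgn_mul,
    show sgn τ * (sgn σ * sgn τ * F (v ∘ ⇑(σ * τ)))
      = (sgn τ * sgn τ) * (sgn σ * F (v ∘ ⇑(σ * τ))) from by ring,
    sgn_sq, one_mul]

lemma altS_apply_comp {m : ℕ} (F : (Fin m → Idx) → ℝ) (τ : Perm (Fin m))
    (v : Fin m → Idx) : altS F (v ∘ τ) = sgn τ * altS F v := by
  unfold altS
  rw [Finset.mul_sum]
  apply Fintype.sum_equiv (Equiv.mulLeft τ)
  intro σ
  simp only [Equiv.coe_mulLeft]
  have h1 : (v ∘ τ) ∘ σ = v ∘ (τ * σ) := rfl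
  rw [h1, sgn_mul,
    show sgn τ * (sgn τ * sgn σ * F (v ∘ ⇑(τ * σ)))
      = (sgn τ * sgn τ) * (sgn σ * F (v ∘ ⇑(τ * σ))) from by ring,
    sgn_sq, one_mul]

lemma altS_congr {m : ℕ} {F G : (Fin m → Idx) → ℝ} (h : ∀ w, F w = G w)
    (v : Fin m → Idx) : altS F v = altS G v := by
  unfold altS; exact Finset.sum_congr rfl fun σ _ => by rw [h]

lemma altS_add {m : ℕ} (F G : (Fin m → Idx) → ℝ) (v : Fin m → Idx) :
    altS (fun w => F w + G w) v = altS F v + altS G v := by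
  unfold altS
  rw [← Finset.sum_add_distrib]
  exact Finset.sum_congr rfl fun σ _ => by ring

lemma altS_sum {m : ℕ} {ι : Type*} (s : Finset ι) (F : ι → (Fin m → Idx) → ℝ)
    (v : Fin m → Idx) :
    altS (fun w => ∑ i ∈ s, F i w) v = ∑ i ∈ s, altS (F i) v := by
  unfold altS
  rw [Finset.sum_comm]
  exact Finset.sum_congr rfl fun σ _ => by rw [Finset.mul_sum]

lemma altS_const_mul {m : ℕ} (c : ℝ) (F : (Fin m → Idx) → ℝ) (v : Fin m → Idx) :
    altS (fun w => c * F w) v = c * altS F v := by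
  unfold altS
  rw [Finset.mul_sum]
  exact Finset.sum_congr rfl fun σ _ => by ring

/-- Absorption of an inner alternating sum. -/
lemma altS_absorb {m n : ℕ} (ext : Perm (Fin m) → Perm (Fin n))
    (hs : ∀ ρ, sgn (ext ρ) = sgn ρ) (F : (Fin n → Idx) → ℝ) (v : Fin n → Idx) :
    altS (fun w => ∑ ρ : Perm (Fin m), sgn ρ * F (w ∘ ext ρ)) v
      = (m.factorial : ℝ) * altS F v := by
  rw [altS_sum]
  have : ∀ ρ : Perm (Fin m),
      altS (fun w => sgn ρ * F (w ∘ ext ρ)) v = altS F v := by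
    intro ρ
    rw [altS_const_mul, altS_comp_right, hs, ← mul_assoc, sgn_sq, one_mul]
  rw [Finset.sum_congr rfl fun ρ _ => this ρ]
  simp [Finset.card_univ, Fintype.card_perm]



/-- extension of a permutation to `Fin (m+1)` fixing `0`. -/
def ext0 {m : ℕ} (ρ : Perm (Fin m)) : Perm (Fin (m + 1)) :=
  Equiv.Perm.decomposeFin.symm (0, ρ)

@[simp] lemma ext0_zero {m : ℕ} (ρ : Perm (Fin m)) : ext0 ρ 0 = 0 :=
  Equiv.Perm.decomposeFin_symm_apply_zero 0 ρ

@[simp] lemma ext0_succ {m : ℕ} (ρ : Perm (Fin m)) (x : Fin m) :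
    ext0 ρ x.succ = (ρ x).succ := by
  rw [ext0, Equiv.Perm.decomposeFin_symm_apply_succ]
  simp

lemma sgn_ext0 {m : ℕ} (ρ : Perm (Fin m)) : sgn (ext0 ρ) = sgn ρ := by
  rw [ext0, sgn, Equiv.Perm.decomposeFin.symm_sign, if_pos rfl, one_mul]; rfl

/-- the inverse cycle: `0 ↦ i`, `succ j ↦ succAbove i j`. -/
def cyc {m : ℕ} (i : Fin (m + 1)) : Perm (Fin (m + 1)) := (Fin.cycleRange i)⁻¹

@[simp] lemma cyc_zero {m : ℕ} (i : Fin (m + 1)) : cyc i 0 = i := by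
  rw [cyc, Equiv.Perm.inv_def]; exact Fin.cycleRange_symm_zero i

@[simp] lemma cyc_succ {m : ℕ} (i : Fin (m + 1)) (j : Fin m) :
    cyc i j.succ = i.succAbove j := by
  rw [cyc, Equiv.Perm.inv_def]; exact Fin.cycleRange_symm_succ i j

lemma sgn_cyc {m : ℕ} (i : Fin (m + 1)) : sgn (cyc i) = (-1 : ℝ) ^ (i : ℕ) := by
  rw [cyc, sgn, Equiv.Perm.sign_inv, Fin.sign_cycleRange]
  induction (i : ℕ) with
  | zero => norm_num
  | succ t ih =>
      rw [pow_succ, pow_succ, Units.val_mul, Int.cast_mul, ih]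
      norm_num

lemma phi_bijective {m : ℕ} :
    Function.Bijective (fun x : Fin (m + 1) × Perm (Fin m) => cyc x.1 * ext0 x.2) := by
  rw [Fintype.bijective_iff_injective_and_card]
  constructor
  · rintro ⟨i, ρ⟩ ⟨i', ρ'⟩ h
    simp only at h
    have h0 : i = i' := by
      have := congrArg (fun σ : Perm (Fin (m+1)) => σ 0) h
      simpa [Equiv.Perm.mul_apply] using this
    subst h0
    have h2 : ext0 ρ = ext0 ρ' := mul_left_cancel h
    have h3 : ρ = ρ' := by
      ext x
      have h4 := congrArg (fun σ : Perm (Fin (m+1)) => σ x.succ) h2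
      simp only [ext0_succ, Fin.succ_inj] at h4
      exact congrArg Fin.val h4
    rw [h3]
  · simp [Fintype.card_perm, Fintype.card_prod, Nat.factorial_succ]


section DLemmas
variable {Y : Type} (D : (Y → ℝ) → Idx → Y → ℝ)
variable (hD_add : ∀ (f g : Y → ℝ) (a : Idx), D (f + g) a = D f a + D g a)
variable (hD_smul : ∀ (c : ℝ) (f : Y → ℝ) (a : Idx), D (c • f) a = c • D f a)

include hD_smul in
lemma D_zero (a : Idx) : D 0 a = 0 := by
  have := hD_smul 0 0 a
  simpa using this

include hD_add hD_smul in
lemma D_sum {ι : Type*} (s : Finset ι) (f : ι → Y → ℝ) (a : Idx) :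
    D (fun y => ∑ i ∈ s, f i y) a = fun y => ∑ i ∈ s, D (f i) a y := by
  classical
  induction s using Finset.induction with
  | empty => simp only [Finset.sum_empty]; exact D_zero D hD_smul a
  | insert _ _ hnotmem ih =>
      rename_i j s'
      have h1 : (fun y => ∑ i ∈ insert j s', f i y)
          = f j + (fun y => ∑ i ∈ s', f i y) := by
        funext y; simp [Finset.sum_insert hnotmem]
      rw [h1, hD_add, ih]
      funext y
      simp [Finset.sum_insert hnotmem]

include hD_smul in
lemma D_const_mul (c : ℝ) (f : Y → ℝ) (a : Idx) :
    D (fun y => c * f y) a = fun y => c * D f a y := by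
  have h1 : (fun y => c * f y) = c • f := rfl
  rw [h1, hD_smul]; rfl

include hD_smul in
lemma D_smul_fun (c : ℝ) (f : Y → ℝ) (a : Idx) (y : Y) :
    D (c • f) a y = c * D f a y := by rw [hD_smul]; rfl

end DLemmas

/-- `dS` of an alternating form as a full alternation sum. -/
lemma dS_eq_altS {Y : Type} (D : (Y → ℝ) → Idx → Y → ℝ)
    (hD_smul : ∀ (c : ℝ) (f : Y → ℝ) (a : Idx), D (c • f) a = c • D f a)
    {m : ℕ} (γ : Form Y m) (hγ : IsAlt γ) (v : Fin (m + 1) → Idx) (y : Y) :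
    altS (fun w => D (γ (w ∘ Fin.succ)) (w 0) y) v
      = (m.factorial : ℝ) * dS D γ v y := by
  unfold altS dS
  rw [← Fintype.sum_bijective _ phi_bijective _ _ (fun x => rfl)]
  rw [Fintype.sum_prod_type, Finset.mul_sum]
  apply Finset.sum_congr rfl
  intro i _
  have hterm : ∀ ρ : Perm (Fin m),
      sgn (cyc i * ext0 ρ) * D (γ ((v ∘ ⇑(cyc i * ext0 ρ)) ∘ Fin.succ))
        ((v ∘ ⇑(cyc i * ext0 ρ)) 0) y
      = (-1 : ℝ) ^ (i : ℕ) * D (γ fun j => v (i.succAbove j)) (v i) y := by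
    intro ρ
    have h0 : (v ∘ ⇑(cyc i * ext0 ρ)) 0 = v i := by
      simp [Equiv.Perm.mul_apply]
    have h1 : (v ∘ ⇑(cyc i * ext0 ρ)) ∘ Fin.succ
        = (fun j => v (i.succAbove j)) ∘ ρ := by
      funext x
      simp [Function.comp, Equiv.Perm.mul_apply]
    have h2 : γ ((v ∘ ⇑(cyc i * ext0 ρ)) ∘ Fin.succ)
        = sgn ρ • γ (fun j => v (i.succAbove j)) := by
      rw [h1]; exact hγ ρ _
    rw [h0, h2, D_smul_fun D hD_smul, sgn_mul, sgn_cyc, sgn_ext0]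
    rw [show (-1:ℝ)^(i:ℕ) * sgn ρ * (sgn ρ * D (γ fun j => v (i.succAbove j)) (v i) y)
        = (sgn ρ * sgn ρ) * ((-1:ℝ)^(i:ℕ) * D (γ fun j => v (i.succAbove j)) (v i) y) from by ring,
      sgn_sq, one_mul]
  rw [Finset.sum_congr rfl fun ρ _ => hterm ρ]
  rw [Finset.sum_const, Finset.card_univ, Fintype.card_perm, Fintype.card_fin,
    nsmul_eq_mul]


/-- Extend a permutation of the left block. -/
def extL {m l : ℕ} (ρ : Perm (Fin m)) : Perm (Fin (m + l)) :=
  finSumFinEquiv.permCongr (Equiv.sumCongr ρ (Equiv.refl (Fin l)))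

@[simp] lemma extL_castAdd {m l : ℕ} (ρ : Perm (Fin m)) (i : Fin m) :
    extL (l := l) ρ (Fin.castAdd l i) = Fin.castAdd l (ρ i) := by
  simp [extL, Equiv.permCongr_apply, finSumFinEquiv_symm_apply_castAdd,
    finSumFinEquiv_apply_left]

@[simp] lemma extL_natAdd {m l : ℕ} (ρ : Perm (Fin m)) (j : Fin l) :
    extL (l := l) ρ (Fin.natAdd m j) = Fin.natAdd m j := by
  simp [extL, Equiv.permCongr_apply, finSumFinEquiv_symm_apply_natAdd,
    finSumFinEquiv_apply_right]

lemma sgn_extL {m l : ℕ} (ρ : Perm (Fin m)) : sgn (extL (l := l) ρ) = sgn ρ := by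
  rw [extL, sgn, Equiv.Perm.sign_permCongr, Equiv.Perm.sign_sumCongr,
    Equiv.Perm.sign_refl, mul_one]
  rfl

/-- Extend a permutation of the right block. -/
def extR {q m : ℕ} (ρ : Perm (Fin m)) : Perm (Fin (q + m)) :=
  finSumFinEquiv.permCongr (Equiv.sumCongr (Equiv.refl (Fin q)) ρ)

@[simp] lemma extR_castAdd {q m : ℕ} (ρ : Perm (Fin m)) (i : Fin q) :
    extR (q := q) ρ (Fin.castAdd m i) = Fin.castAdd m i := by
  simp [extR, Equiv.permCongr_apply, finSumFinEquiv_symm_apply_castAdd,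
    finSumFinEquiv_apply_left]

@[simp] lemma extR_natAdd {q m : ℕ} (ρ : Perm (Fin m)) (j : Fin m) :
    extR (q := q) ρ (Fin.natAdd q j) = Fin.natAdd q (ρ j) := by
  simp [extR, Equiv.permCongr_apply, finSumFinEquiv_symm_apply_natAdd,
    finSumFinEquiv_apply_right]

lemma sgn_extR {q m : ℕ} (ρ : Perm (Fin m)) : sgn (extR (q := q) ρ) = sgn ρ := by
  rw [extR, sgn, Equiv.Perm.sign_permCongr, Equiv.Perm.sign_sumCongr,
    Equiv.Perm.sign_refl, one_mul]
  rfl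

/-- Transport of an alternation sum along a degree cast. -/
lemma altS_cast {m n : ℕ} (h : m = n) (F : (Fin m → Idx) → ℝ) (v : Fin n → Idx) :
    altS F (v ∘ Fin.cast h) = altS (fun w => F (w ∘ Fin.cast h)) v := by
  unfold altS
  apply Fintype.sum_bijective (fun σ => (finCongr h).permCongr σ)
    (Equiv.bijective _)
  intro σ
  have hs : sgn ((finCongr h).permCongr σ) = sgn σ := by
    rw [sgn, sgn, Equiv.Perm.sign_permCongr]
  rw [hs]
  congr 1

/-- `wedge` unfolded as an alternation sum. -/
lemma wedge_eq_altS {Y : Type} {k l : ℕ} (α : Form Y k) (β : Form Y l)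
    (v : Fin (k + l) → Idx) (y : Y) :
    wedge α β v y = (1 / ((k.factorial : ℝ) * (l.factorial : ℝ))) *
      altS (fun w => α (w ∘ Fin.castAdd l) y * β (w ∘ Fin.natAdd k) y) v := rfl

lemma isAlt_wedge {Y : Type} {k l : ℕ} (α : Form Y k) (β : Form Y l) :
    IsAlt (wedge α β) := by
  intro σ v
  funext y
  rw [Pi.smul_apply, smul_eq_mul, wedge_eq_altS, wedge_eq_altS, altS_apply_comp]
  ring

lemma isAlt_insertF {Y : Type} {p k : ℕ} (M : Idx → Form Y p) (α : Form Y (k + 1)) :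
    IsAlt (insertF M α) := by
  intro σ v
  funext y
  rw [Pi.smul_apply, smul_eq_mul]
  unfold insertF
  rw [Finset.mul_sum]
  exact Finset.sum_congr rfl fun a _ => by
    rw [congrFun (isAlt_wedge (M a) (contr α a) σ v) y, Pi.smul_apply, smul_eq_mul]

lemma isAlt_contr {Y : Type} {k : ℕ} {lam : Form Y (k + 1)} (hlam : IsAlt lam)
    (a : Idx) : IsAlt (contr lam a) := by
  intro σ v
  unfold contr
  have h1 : Fin.cons a (v ∘ σ) = (Fin.cons a v : Fin (k+1) → Idx) ∘ (ext0 σ) := by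
    funext x
    refine Fin.cases ?_ (fun j => ?_) x
    · simp
    · simp
  rw [h1, hlam (ext0 σ), sgn_ext0]

/-- The splitting of the contraction of `dS lam`. -/
lemma contr_dS {Y : Type} (D : (Y → ℝ) → Idx → Y → ℝ) {k : ℕ}
    (lam : Form Y (k + 1)) (a : Idx) (u : Fin (k + 1) → Idx) (y : Y) :
    contr (dS D lam) a u y = D (lam u) a y - dS D (contr lam a) u y := by
  unfold contr dS
  rw [Fin.sum_univ_succ]
  have h0 : (fun j : Fin (k+1) => (Fin.cons a u : Fin (k+2) → Idx) ((0 : Fin (k+2)).succAbove j)) = u := by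
    funext j; rw [Fin.zero_succAbove, Fin.cons_succ]
  rw [h0]
  simp only [Fin.val_zero, pow_zero, one_mul, Fin.cons_zero]
  have h1 : ∀ i : Fin (k + 1),
      ((-1:ℝ) ^ ((i.succ : Fin (k+2)) : ℕ)) *
        D (lam fun j => (Fin.cons a u : Fin (k+2) → Idx) (i.succ.succAbove j)) ((Fin.cons a u : Fin (k+2) → Idx) i.succ) y
      = -(((-1:ℝ) ^ (i : ℕ)) * D ((contr lam a) fun j => u (i.succAbove j)) (u i) y) := by
    intro i
    have h2 : (fun j : Fin (k+1) => (Fin.cons a u : Fin (k+2) → Idx) (i.succ.succAbove j))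
        = Fin.cons a (fun j => u (i.succAbove j)) := by
      funext j
      refine Fin.cases ?_ (fun x => ?_) j
      · simp [Fin.succ_succAbove_zero]
      · rw [Fin.succ_succAbove_succ, Fin.cons_succ, Fin.cons_succ]
    rw [h2, Fin.val_succ, pow_succ, Fin.cons_succ]
    unfold contr
    ring
  rw [Finset.sum_congr rfl fun i _ => h1 i, Finset.sum_neg_distrib]
  simp only [contr]
  ring

/-- The parallelism hypothesis, unfolded. -/
lemma par_unfold {Y : Type} {D : (Y → ℝ) → Idx → Y → ℝ}
    {Γ : Idx → Idx → Idx → Y → ℝ} {k : ℕ} {lam : Form Y (k + 1)}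
    (hpar : ∀ a : Idx, covD D Γ a lam = 0) (a : Idx) (u : Fin (k + 1) → Idx)
    (y : Y) :
    D (lam u) a y = ∑ j : Fin (k + 1), ∑ b : Idx,
      Γ a (u j) b y * lam (Function.update u j b) y := by
  have h := congrFun (congrFun (hpar a) u) y
  unfold covD at h
  simp only [Pi.zero_apply] at h
  linarith [h]


lemma altS_sub {m : ℕ} (F G : (Fin m → Idx) → ℝ) (v : Fin m → Idx) :
    altS (fun w => F w - G w) v = altS F v - altS G v := by
  unfold altS
  rw [← Finset.sum_sub_distrib]
  exact Finset.sum_congr rfl fun σ _ => by ring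

lemma sgn_cycleRange' {m : ℕ} (t : Fin (m + 1)) :
    sgn (Fin.cycleRange t) = (-1 : ℝ) ^ (t : ℕ) := by
  rw [← sgn_inv]; exact sgn_cyc t

lemma val_succAbove {N : ℕ} (t : Fin (N + 1)) (x : Fin N) :
    ((t.succAbove x) : ℕ) = if (x : ℕ) < (t : ℕ) then (x : ℕ) else (x : ℕ) + 1 := by
  by_cases h : (x : ℕ) < (t : ℕ)
  · rw [if_pos h, Fin.succAbove_of_castSucc_lt]
    · simp
    · rwa [Fin.lt_iff_val_lt_val, Fin.coe_castSucc]
  · rw [if_neg h, Fin.succAbove_of_le_castSucc]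
    · simp
    · rw [Fin.le_iff_val_le_val, Fin.coe_castSucc]; omega

lemma neg_one_sq_pow (j : ℕ) : ((-1 : ℝ) ^ j) * ((-1 : ℝ) ^ j) = 1 := by
  rw [← pow_add]
  exact Even.neg_one_pow ⟨j, rfl⟩

lemma neg_pow_cancel (p j : ℕ) : ((-1:ℝ)^j) * ((-1:ℝ)^(p+j)) = (-1:ℝ)^p := by
  rw [pow_add, show ((-1:ℝ)^j) * ((-1:ℝ)^p * (-1:ℝ)^j)
    = ((-1:ℝ)^j * (-1:ℝ)^j) * (-1:ℝ)^p from by ring, neg_one_sq_pow, one_mul]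

section MainPieces
variable {Y : Type} (D : (Y → ℝ) → Idx → Y → ℝ)
variable (hD_add : ∀ (f g : Y → ℝ) (a : Idx), D (f + g) a = D f a + D g a)
variable (hD_mul : ∀ (f g : Y → ℝ) (a : Idx), D (f * g) a = f * D g a + g * D f a)
variable (hD_smul : ∀ (c : ℝ) (f : Y → ℝ) (a : Idx), D (c • f) a = c • D f a)

include hD_add hD_smul in
lemma D_unfold {m : ℕ} (c : ℝ) (f : Idx → Equiv.Perm (Fin m) → Y → ℝ) (x : Idx) :
    D (fun y' => ∑ a : Idx, c * ∑ ρ : Perm (Fin m), sgn ρ * f a ρ y') x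
    = fun y => ∑ a : Idx, c * ∑ ρ : Perm (Fin m), sgn ρ * D (f a ρ) x y := by
  rw [D_sum D hD_add hD_smul Finset.univ
    (fun a => fun y' => c * ∑ ρ : Perm (Fin m), sgn ρ * f a ρ y') x]
  funext y
  apply Finset.sum_congr rfl
  intro a _
  rw [congrFun (D_const_mul D hD_smul c
    (fun y' => ∑ ρ : Perm (Fin m), sgn ρ * f a ρ y') x) y]
  congr 1
  rw [congrFun (D_sum D hD_add hD_smul Finset.univ
    (fun ρ => fun y' => sgn ρ * f a ρ y') x) y]
  apply Finset.sum_congr rfl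
  intro ρ _
  rw [congrFun (D_const_mul D hD_smul (sgn ρ) (f a ρ) x) y]

include hD_add hD_mul hD_smul in
lemma pieceA {p k : ℕ} (M : Idx → Form Y p) (lam : Form Y (k + 1))
    (v : Fin (p + k + 1) → Idx) (y : Y) :
    dS D (insertF M lam) v y
      = (1 / ((p.factorial : ℝ) * (k.factorial : ℝ))) *
        ∑ a : Idx,
          (altS (fun w => M a (fun i => w (Fin.castAdd k i).succ) y *
              D (lam (Fin.cons a (fun j => w (Fin.natAdd p j).succ))) (w 0) y) v
           + altS (fun w => lam (Fin.cons a (fun j => w (Fin.natAdd p j).succ)) y *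
              D (M a (fun i => w (Fin.castAdd k i).succ)) (w 0) y) v) := by
  have hA : altS (fun w => D ((insertF M lam) (w ∘ Fin.succ)) (w 0) y) v
      = ((p + k).factorial : ℝ) * dS D (insertF M lam) v y :=
    dS_eq_altS D hD_smul (insertF M lam) (isAlt_insertF M lam) v y
  have hfac : ((p + k).factorial : ℝ) ≠ 0 := Nat.cast_ne_zero.mpr (Nat.factorial_ne_zero _)
  -- unfold the inner D
  have hinner : ∀ w : Fin (p + k + 1) → Idx,
      D ((insertF M lam) (w ∘ Fin.succ)) (w 0) y
      = ∑ a : Idx, (1 / ((p.factorial : ℝ) * (k.factorial : ℝ))) *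
          ∑ ρ : Perm (Fin (p + k)), sgn ρ *
            D (M a (fun i => w (ρ (Fin.castAdd k i)).succ) *
               lam (Fin.cons a (fun j => w (ρ (Fin.natAdd p j)).succ))) (w 0) y := by
    intro w
    exact congrFun (D_unfold D hD_add hD_smul
      (1 / ((p.factorial : ℝ) * (k.factorial : ℝ)))
      (fun a ρ => M a (fun i => w (ρ (Fin.castAdd k i)).succ) *
        lam (Fin.cons a (fun j => w (ρ (Fin.natAdd p j)).succ))) (w 0)) y
  rw [altS_congr hinner, altS_sum] at hA
  -- absorb ext0 in each summand
  have habs : ∀ a : Idx,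
      altS (fun w => (1 / ((p.factorial : ℝ) * (k.factorial : ℝ))) *
          ∑ ρ : Perm (Fin (p + k)), sgn ρ *
            D (M a (fun i => w (ρ (Fin.castAdd k i)).succ) *
               lam (Fin.cons a (fun j => w (ρ (Fin.natAdd p j)).succ))) (w 0) y) v
      = (1 / ((p.factorial : ℝ) * (k.factorial : ℝ))) * (((p + k).factorial : ℝ) *
          altS (fun w =>
            D (M a (fun i => w (Fin.castAdd k i).succ) *
               lam (Fin.cons a (fun j => w (Fin.natAdd p j).succ))) (w 0) y) v) := by
    intro a
    rw [altS_const_mul]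
    congr 1
    have hcg : ∀ w : Fin (p + k + 1) → Idx,
        (∑ ρ : Perm (Fin (p + k)), sgn ρ *
            D (M a (fun i => w (ρ (Fin.castAdd k i)).succ) *
               lam (Fin.cons a (fun j => w (ρ (Fin.natAdd p j)).succ))) (w 0) y)
        = ∑ ρ : Perm (Fin (p + k)), sgn ρ *
            (fun w' => D (M a (fun i => w' (Fin.castAdd k i).succ) *
               lam (Fin.cons a (fun j => w' (Fin.natAdd p j).succ))) (w' 0) y) (w ∘ ext0 ρ) := by
      intro w
      apply Finset.sum_congr rfl
      intro ρ _
      congr 1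
    rw [altS_congr hcg]
    exact altS_absorb ext0 sgn_ext0
      (fun w' => D ((M a fun i => w' (Fin.castAdd k i).succ) *
        lam (Fin.cons a fun j => w' (Fin.natAdd p j).succ)) (w' 0) y) v
  rw [Finset.sum_congr rfl fun a _ => habs a] at hA
  -- Leibniz
  have hleib : ∀ a : Idx, ∀ w : Fin (p + k + 1) → Idx,
      D (M a (fun i => w (Fin.castAdd k i).succ) *
         lam (Fin.cons a (fun j => w (Fin.natAdd p j).succ))) (w 0) y
      = M a (fun i => w (Fin.castAdd k i).succ) y *
          D (lam (Fin.cons a (fun j => w (Fin.natAdd p j).succ))) (w 0) y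
        + lam (Fin.cons a (fun j => w (Fin.natAdd p j).succ)) y *
          D (M a (fun i => w (Fin.castAdd k i).succ)) (w 0) y := by
    intro a w
    rw [hD_mul]; rfl
  -- conclude
  have hS : ∑ a : Idx, (1 / ((p.factorial : ℝ) * (k.factorial : ℝ))) *
        (((p + k).factorial : ℝ) *
          altS (fun w =>
            D (M a (fun i => w (Fin.castAdd k i).succ) *
               lam (Fin.cons a (fun j => w (Fin.natAdd p j).succ))) (w 0) y) v)
      = ((p + k).factorial : ℝ) *
        ((1 / ((p.factorial : ℝ) * (k.factorial : ℝ))) *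
          ∑ a : Idx,
            (altS (fun w => M a (fun i => w (Fin.castAdd k i).succ) y *
                D (lam (Fin.cons a (fun j => w (Fin.natAdd p j).succ))) (w 0) y) v
             + altS (fun w => lam (Fin.cons a (fun j => w (Fin.natAdd p j).succ)) y *
                D (M a (fun i => w (Fin.castAdd k i).succ)) (w 0) y) v)) := by
    rw [Finset.mul_sum, Finset.mul_sum]
    apply Finset.sum_congr rfl
    intro a _
    rw [altS_congr (hleib a), altS_add]
    ring
  apply mul_left_cancel₀ hfac
  rw [← hA, hS]

include hD_smul in
lemma pieceB {p k : ℕ} (Γ : Idx → Idx → Idx → Y → ℝ)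
    (M : Idx → Form Y p) (lam : Form Y (k + 1)) (hlam : IsAlt lam)
    (hpar : ∀ a : Idx, covD D Γ a lam = 0)
    (v : Fin (p + k + 1) → Idx) (y : Y) :
    ((-1 : ℝ) ^ p) *
        insertF M (dS D lam) (v ∘ Fin.cast (Nat.add_assoc p k 1).symm) y
      = (1 / ((p.factorial : ℝ) * (k.factorial : ℝ))) *
          (∑ a : Idx, ∑ b : Idx,
            altS (fun w => Γ a (w 0) b y *
              (M a (fun i => w (Fin.castAdd k i).succ) y *
               lam (Fin.cons b (fun j => w (Fin.natAdd p j).succ)) y)) v)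
        - (1 / ((p.factorial : ℝ) * (k.factorial : ℝ))) *
          ∑ a : Idx,
            altS (fun w => M a (fun i => w (Fin.castAdd k i).succ) y *
              D (lam (Fin.cons a (fun j => w (Fin.natAdd p j).succ))) (w 0) y) v := by
  have h₁ : p + (k+1) = p + k + 1 := by omega
  have hkf : (k.factorial : ℝ) ≠ 0 := Nat.cast_ne_zero.mpr (Nat.factorial_ne_zero _)
  have hfact1 : (((k+1)).factorial : ℝ) = ((k:ℝ) + 1) * (k.factorial : ℝ) := by
    rw [Nat.factorial_succ]; push_cast; ring
  -- the distinguished slot `p`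
  set tp : Fin (p + k + 1) := Fin.cast h₁ (Fin.natAdd p 0) with htpdef
  have htpv : (tp : ℕ) = p := by simp [htpdef]
  -- step 0: unfold insertF as wedges (definitional)
  have e0 : insertF M (dS D lam) (v ∘ Fin.cast h₁) y
      = ∑ a : Idx, (1 / ((p.factorial : ℝ) * ((k+1).factorial : ℝ))) *
          altS (fun w => M a (w ∘ Fin.castAdd (k+1)) y *
            contr (dS D lam) a (w ∘ Fin.natAdd p) y) (v ∘ Fin.cast h₁) := by
    show (∑ a : Idx, wedge (M a) (contr (dS D lam) a) (v ∘ Fin.cast h₁) y) = _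
    exact Finset.sum_congr rfl fun a _ => wedge_eq_altS (M a) (contr (dS D lam) a) _ y
  have ecast : (v ∘ Fin.cast (Nat.add_assoc p k 1).symm) = v ∘ Fin.cast h₁ := rfl
  rw [ecast, e0]
  -- step 1: split via contr_dS
  have esplit : ∀ a : Idx,
      altS (fun w => M a (w ∘ Fin.castAdd (k+1)) y *
          contr (dS D lam) a (w ∘ Fin.natAdd p) y) (v ∘ Fin.cast h₁)
      = altS (fun w => M a (w ∘ Fin.castAdd (k+1)) y *
          D (lam (w ∘ Fin.natAdd p)) a y) (v ∘ Fin.cast h₁)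
        - altS (fun w => M a (w ∘ Fin.castAdd (k+1)) y *
          dS D (contr lam a) (w ∘ Fin.natAdd p) y) (v ∘ Fin.cast h₁) := by
    intro a
    rw [← altS_sub]
    apply altS_congr
    intro w
    rw [contr_dS]
    ring
  rw [Finset.sum_congr rfl fun a _ => by rw [esplit a]]
  -- ===================== the dS-part =====================
  have eW2 : ∀ a : Idx,
      altS (fun w => M a (w ∘ Fin.castAdd (k+1)) y *
          dS D (contr lam a) (w ∘ Fin.natAdd p) y) (v ∘ Fin.cast h₁)
      = ((k+1).factorial : ℝ) * ((1 / (k.factorial : ℝ)) * (((-1:ℝ)^p) *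
          altS (fun w => M a (fun i => w (Fin.castAdd k i).succ) y *
            D (lam (Fin.cons a (fun j => w (Fin.natAdd p j).succ))) (w 0) y) v)) := by
    intro a
    have hds : ∀ w : Fin (p + (k+1)) → Idx,
        M a (w ∘ Fin.castAdd (k+1)) y * dS D (contr lam a) (w ∘ Fin.natAdd p) y
        = (1 / (k.factorial : ℝ)) * ∑ ρ : Perm (Fin (k+1)), sgn ρ *
            ((fun w' => M a (w' ∘ Fin.castAdd (k+1)) y *
              D (lam (Fin.cons a (fun x : Fin k => w' (Fin.natAdd p x.succ))))
                (w' (Fin.natAdd p 0)) y) (w ∘ extR ρ)) := by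
      intro w
      have h1 := dS_eq_altS D hD_smul (contr lam a) (isAlt_contr hlam a)
        (w ∘ Fin.natAdd p) y
      have h2 : dS D (contr lam a) (w ∘ Fin.natAdd p) y
          = (1 / (k.factorial : ℝ)) *
            altS (fun z => D ((contr lam a) (z ∘ Fin.succ)) (z 0) y) (w ∘ Fin.natAdd p) := by
        rw [h1]; field_simp
      rw [h2, ← mul_assoc,
        mul_comm (M a (w ∘ Fin.castAdd (k+1)) y) (1 / (k.factorial : ℝ)), mul_assoc]
      congr 1
      unfold altS
      rw [Finset.mul_sum]
      apply Finset.sum_congr rfl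
      intro ρ _
      simp only [contr]
      have u1 : (w ∘ ⇑(extR ρ)) ∘ Fin.castAdd (k+1) = w ∘ Fin.castAdd (k+1) := by
        funext i; simp [Function.comp]
      have u2 : Fin.cons a (fun x : Fin k => (w ∘ ⇑(extR ρ)) (Fin.natAdd p x.succ))
          = (Fin.cons a (((w ∘ Fin.natAdd p) ∘ ⇑ρ) ∘ Fin.succ) : Fin (k+1) → Idx) := by
        funext x'
        refine Fin.cases ?_ (fun x2 => ?_) x'
        · rfl
        · simp [Function.comp]
      have u3 : (w ∘ ⇑(extR ρ)) (Fin.natAdd p 0) = ((w ∘ Fin.natAdd p) ∘ ⇑ρ) 0 := by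
        simp [Function.comp]
      rw [u1, u2, u3]
      ring
    rw [altS_congr hds, altS_const_mul]
    have habs := altS_absorb extR sgn_extR
      (fun w' => M a (w' ∘ Fin.castAdd (k+1)) y *
        D (lam (Fin.cons a (fun x : Fin k => w' (Fin.natAdd p x.succ))))
          (w' (Fin.natAdd p 0)) y) (v ∘ Fin.cast h₁)
    rw [habs, altS_cast h₁]
    -- relate to the A1-form by the cycle at slot p
    have c1 : ∀ w : Fin (p + k + 1) → Idx,
        ((w ∘ ⇑(Fin.cycleRange tp)) ∘ Fin.cast h₁) ∘ Fin.castAdd (k+1)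
        = fun i => w (Fin.castAdd k i).succ := by
      intro w; funext i
      simp only [Function.comp]
      congr 1
      apply Fin.ext
      rw [Fin.coe_cycleRange_of_lt (show Fin.cast h₁ (Fin.castAdd (k+1) i) < tp by
        rw [Fin.lt_iff_val_lt_val, htpv]
        simp only [Fin.coe_cast, Fin.coe_castAdd]
        exact i.isLt)]
      simp
    have c2 : ∀ w : Fin (p + k + 1) → Idx,
        (fun x : Fin k => ((w ∘ ⇑(Fin.cycleRange tp)) ∘ Fin.cast h₁) (Fin.natAdd p x.succ))
        = fun j => w (Fin.natAdd p j).succ := by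
      intro w; funext x
      simp only [Function.comp]
      congr 1
      rw [Fin.cycleRange_of_gt (show tp < Fin.cast h₁ (Fin.natAdd p x.succ) by
        rw [Fin.lt_iff_val_lt_val, htpv]
        simp only [Fin.coe_cast, Fin.coe_natAdd, Fin.val_succ]
        omega)]
      apply Fin.ext
      simp only [Fin.coe_cast, Fin.coe_natAdd, Fin.val_succ]
      omega
    have c3 : ∀ w : Fin (p + k + 1) → Idx,
        ((w ∘ ⇑(Fin.cycleRange tp)) ∘ Fin.cast h₁) (Fin.natAdd p 0) = w 0 := by
      intro w
      simp only [Function.comp]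
      congr 1
      have e : Fin.cast h₁ (Fin.natAdd p 0) = tp := rfl
      rw [e, Fin.cycleRange_self]
    have hpt : ∀ w : Fin (p + k + 1) → Idx,
        M a (fun i => w (Fin.castAdd k i).succ) y *
          D (lam (Fin.cons a (fun j => w (Fin.natAdd p j).succ))) (w 0) y
        = (fun w2 => (fun w' => M a (w' ∘ Fin.castAdd (k+1)) y *
              D (lam (Fin.cons a (fun x : Fin k => w' (Fin.natAdd p x.succ))))
                (w' (Fin.natAdd p 0)) y) (w2 ∘ Fin.cast h₁))
            (w ∘ ⇑(Fin.cycleRange tp)) := by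
      intro w
      simp only []
      rw [c1 w, c2 w, c3 w]
    have h5 : altS (fun w => M a (fun i => w (Fin.castAdd k i).succ) y *
          D (lam (Fin.cons a (fun j => w (Fin.natAdd p j).succ))) (w 0) y) v
        = sgn (Fin.cycleRange tp) *
          altS (fun w2 => (fun w' => M a (w' ∘ Fin.castAdd (k+1)) y *
              D (lam (Fin.cons a (fun x : Fin k => w' (Fin.natAdd p x.succ))))
                (w' (Fin.natAdd p 0)) y) (w2 ∘ Fin.cast h₁)) v := by
      rw [altS_congr hpt]
      exact altS_comp_right _ _ v
    rw [h5, sgn_cycleRange', htpv, ← mul_assoc ((-1:ℝ)^p) ((-1:ℝ)^p) _,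
      neg_one_sq_pow, one_mul, mul_left_comm]
  -- ===================== the Γ-part =====================
  have eW1 : ∀ a : Idx,
      altS (fun w => M a (w ∘ Fin.castAdd (k+1)) y *
          D (lam (w ∘ Fin.natAdd p)) a y) (v ∘ Fin.cast h₁)
      = ((k:ℝ) + 1) * (((-1:ℝ)^p) * ∑ b : Idx,
          altS (fun w => Γ a (w 0) b y *
            (M a (fun i => w (Fin.castAdd k i).succ) y *
             lam (Fin.cons b (fun j => w (Fin.natAdd p j).succ)) y)) v) := by
    intro a
    -- expand the parallelism identity and the update-to-cons sign
    have hW1 : ∀ w : Fin (p + (k+1)) → Idx,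
        M a (w ∘ Fin.castAdd (k+1)) y * D (lam (w ∘ Fin.natAdd p)) a y
        = ∑ j : Fin (k+1), ∑ b : Idx, ((-1:ℝ) ^ (j:ℕ)) *
            (Γ a (w (Fin.natAdd p j)) b y *
              (M a (w ∘ Fin.castAdd (k+1)) y *
               lam (Fin.cons b (fun x : Fin k => w (Fin.natAdd p (j.succAbove x)))) y)) := by
      intro w
      rw [par_unfold hpar a (w ∘ Fin.natAdd p) y, Finset.mul_sum]
      apply Finset.sum_congr rfl
      intro j _
      rw [Finset.mul_sum]
      apply Finset.sum_congr rfl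
      intro b _
      -- update-to-cons
      have harg : (Function.update (w ∘ Fin.natAdd p) j b) ∘ ⇑(cyc j)
          = (Fin.cons b (fun x : Fin k => w (Fin.natAdd p (j.succAbove x))) : Fin (k+1) → Idx) := by
        funext x
        refine Fin.cases ?_ (fun x' => ?_) x
        · rw [Function.comp_apply, cyc_zero, Fin.cons_zero, Function.update_self]
        · rw [Function.comp_apply, cyc_succ, Fin.cons_succ,
            Function.update_of_ne (Fin.succAbove_ne j x')]
          rfl
      have hc := hlam (cyc j) (Function.update (w ∘ Fin.natAdd p) j b)
      rw [harg] at hc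
      have hcy := congrFun hc y
      rw [Pi.smul_apply, smul_eq_mul, sgn_cyc] at hcy
      have hupd : lam (Function.update (w ∘ Fin.natAdd p) j b) y
          = ((-1:ℝ) ^ (j:ℕ)) *
            lam (Fin.cons b (fun x : Fin k => w (Fin.natAdd p (j.succAbove x)))) y := by
        rw [hcy, ← mul_assoc, neg_one_sq_pow, one_mul]
      have hwj : (w ∘ Fin.natAdd p) j = w (Fin.natAdd p j) := rfl
      rw [hupd, hwj]
      ring
    rw [altS_congr hW1, altS_sum]
    -- per j: reindex by the cycle at slot p+j
    have hper : ∀ j : Fin (k+1),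
        altS (fun w => ∑ b : Idx, ((-1:ℝ) ^ (j:ℕ)) *
            (Γ a (w (Fin.natAdd p j)) b y *
              (M a (w ∘ Fin.castAdd (k+1)) y *
               lam (Fin.cons b (fun x : Fin k => w (Fin.natAdd p (j.succAbove x)))) y)))
          (v ∘ Fin.cast h₁)
        = ((-1:ℝ)^p) * ∑ b : Idx,
            altS (fun w => Γ a (w 0) b y *
              (M a (fun i => w (Fin.castAdd k i).succ) y *
               lam (Fin.cons b (fun j => w (Fin.natAdd p j).succ)) y)) v := by
      intro j
      rw [altS_sum, Finset.mul_sum]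
      apply Finset.sum_congr rfl
      intro b _
      set jj : Fin (p + k + 1) := Fin.cast h₁ (Fin.natAdd p j) with hjjdef
      have hjjv : (jj : ℕ) = p + (j : ℕ) := by simp [hjjdef]
      rw [altS_const_mul, altS_cast h₁]
      -- pointwise: the transported function is G ∘ (· ∘ cyc jj)
      have d1 : ∀ w : Fin (p + k + 1) → Idx,
          (fun i : Fin p => (w ∘ ⇑(cyc jj)) (Fin.castAdd k i).succ)
          = (w ∘ Fin.cast h₁) ∘ Fin.castAdd (k+1) := by
        intro w; funext i
        simp only [Function.comp]
        congr 1
        rw [cyc_succ]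
        apply Fin.ext
        rw [val_succAbove]
        simp only [Fin.coe_castAdd, Fin.coe_cast, hjjv]
        rw [if_pos (by have := i.isLt; omega)]
      have d2 : ∀ w : Fin (p + k + 1) → Idx,
          (fun j' : Fin k => (w ∘ ⇑(cyc jj)) (Fin.natAdd p j').succ)
          = fun x : Fin k => (w ∘ Fin.cast h₁) (Fin.natAdd p (j.succAbove x)) := by
        intro w; funext x
        simp only [Function.comp]
        congr 1
        rw [cyc_succ]
        apply Fin.ext
        rw [val_succAbove]
        simp only [Fin.coe_natAdd, Fin.coe_cast, hjjv]
        rw [val_succAbove]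
        split_ifs <;> omega
      have d0 : ∀ w : Fin (p + k + 1) → Idx,
          (w ∘ ⇑(cyc jj)) 0 = (w ∘ Fin.cast h₁) (Fin.natAdd p j) := by
        intro w
        rw [Function.comp_apply, Function.comp_apply, cyc_zero]
      have hpt2 : ∀ w : Fin (p + k + 1) → Idx,
          Γ a ((w ∘ Fin.cast h₁) (Fin.natAdd p j)) b y *
            (M a ((w ∘ Fin.cast h₁) ∘ Fin.castAdd (k+1)) y *
             lam (Fin.cons b (fun x : Fin k => (w ∘ Fin.cast h₁) (Fin.natAdd p (j.succAbove x)))) y)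
          = (fun w2 => Γ a (w2 0) b y *
              (M a (fun i => w2 (Fin.castAdd k i).succ) y *
               lam (Fin.cons b (fun j' => w2 (Fin.natAdd p j').succ)) y)) (w ∘ ⇑(cyc jj)) := by
        intro w
        show _ = Γ a ((w ∘ ⇑(cyc jj)) 0) b y *
            (M a (fun i => (w ∘ ⇑(cyc jj)) (Fin.castAdd k i).succ) y *
             lam (Fin.cons b (fun j' => (w ∘ ⇑(cyc jj)) (Fin.natAdd p j').succ)) y)
        rw [d0 w, d1 w, d2 w]
      show ((-1:ℝ)^(j:ℕ)) * altS (fun w =>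
          Γ a ((w ∘ Fin.cast h₁) (Fin.natAdd p j)) b y *
            (M a ((w ∘ Fin.cast h₁) ∘ Fin.castAdd (k+1)) y *
             lam (Fin.cons b (fun x : Fin k => (w ∘ Fin.cast h₁) (Fin.natAdd p (j.succAbove x)))) y)) v
        = _
      rw [altS_congr hpt2,
        altS_comp_right (fun w2 => Γ a (w2 0) b y *
          (M a (fun i => w2 (Fin.castAdd k i).succ) y *
           lam (Fin.cons b (fun j' => w2 (Fin.natAdd p j').succ)) y)) (cyc jj) v,
        sgn_cyc, hjjv, ← mul_assoc, neg_pow_cancel]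
    -- sum over j of a constant
    rw [Finset.sum_congr rfl fun j _ => hper j, Finset.sum_const, Finset.card_univ,
      Fintype.card_fin, nsmul_eq_mul]
    push_cast
    ring
  -- ===================== assemble =====================
  rw [Finset.sum_congr rfl fun a _ => by rw [eW1 a, eW2 a]]
  have hpf : (p.factorial : ℝ) ≠ 0 := Nat.cast_ne_zero.mpr (Nat.factorial_ne_zero _)
  have hk1 : ((k:ℝ) + 1) ≠ 0 := by positivity
  have hfinal : ∀ a : Idx,
      ((-1:ℝ)^p) * ((1 / ((p.factorial : ℝ) * ((k+1).factorial : ℝ))) *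
        (((k:ℝ) + 1) * (((-1:ℝ)^p) * ∑ b : Idx,
            altS (fun w => Γ a (w 0) b y *
              (M a (fun i => w (Fin.castAdd k i).succ) y *
               lam (Fin.cons b (fun j => w (Fin.natAdd p j).succ)) y)) v)
          - ((k+1).factorial : ℝ) * ((1 / (k.factorial : ℝ)) * (((-1:ℝ)^p) *
            altS (fun w => M a (fun i => w (Fin.castAdd k i).succ) y *
              D (lam (Fin.cons a (fun j => w (Fin.natAdd p j).succ))) (w 0) y) v))))
      = (1 / ((p.factorial : ℝ) * (k.factorial : ℝ))) * (∑ b : Idx,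
            altS (fun w => Γ a (w 0) b y *
              (M a (fun i => w (Fin.castAdd k i).succ) y *
               lam (Fin.cons b (fun j => w (Fin.natAdd p j).succ)) y)) v)
        - (1 / ((p.factorial : ℝ) * (k.factorial : ℝ))) *
            altS (fun w => M a (fun i => w (Fin.castAdd k i).succ) y *
              D (lam (Fin.cons a (fun j => w (Fin.natAdd p j).succ))) (w 0) y) v := by
    intro a
    set X := ∑ b : Idx,
        altS (fun w => Γ a (w 0) b y *
          (M a (fun i => w (Fin.castAdd k i).succ) y *
           lam (Fin.cons b (fun j => w (Fin.natAdd p j).succ)) y)) v with hX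
    set Z := altS (fun w => M a (fun i => w (Fin.castAdd k i).succ) y *
        D (lam (Fin.cons a (fun j => w (Fin.natAdd p j).succ))) (w 0) y) v with hZ
    rw [show ((-1:ℝ)^p) * ((1 / ((p.factorial : ℝ) * ((k+1).factorial : ℝ))) *
        (((k:ℝ) + 1) * (((-1:ℝ)^p) * X)
          - ((k+1).factorial : ℝ) * ((1 / (k.factorial : ℝ)) * (((-1:ℝ)^p) * Z))))
      = (((-1:ℝ)^p) * ((-1:ℝ)^p)) * ((1 / ((p.factorial : ℝ) * ((k+1).factorial : ℝ))) *
        (((k:ℝ) + 1) * X - ((k+1).factorial : ℝ) * ((1 / (k.factorial : ℝ)) * Z)))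
      from by ring, neg_one_sq_pow, one_mul, hfact1]
    field_simp
  rw [Finset.mul_sum, Finset.sum_congr rfl fun a _ => hfinal a,
    Finset.sum_sub_distrib, ← Finset.mul_sum, ← Finset.mul_sum]

def ext2 {p k : ℕ} (ρ : Perm (Fin (1+p))) : Perm (Fin ((p+1)+k)) :=
  extL ((finCongr (show 1+p = p+1 by omega)).permCongr ρ)

lemma sgn_ext2 {p k : ℕ} (ρ : Perm (Fin (1+p))) : sgn (ext2 (k := k) ρ) = sgn ρ := by
  rw [ext2, sgn_extL, sgn, Equiv.Perm.sign_permCongr]; rfl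

lemma ext2_castAdd {p k : ℕ} (ρ : Perm (Fin (1+p))) (t : Fin (1+p)) :
    ext2 (k := k) ρ (Fin.castAdd k (Fin.cast (show 1+p = p+1 by omega) t))
      = Fin.castAdd k (Fin.cast (show 1+p = p+1 by omega) (ρ t)) := by
  rw [ext2, extL_castAdd]
  congr 1

lemma ext2_natAdd {p k : ℕ} (ρ : Perm (Fin (1+p))) (j : Fin k) :
    ext2 (k := k) ρ (Fin.natAdd (p+1) j) = Fin.natAdd (p+1) j := by
  rw [ext2, extL_natAdd]

include hD_add hD_smul in
lemma pieceC {p k : ℕ} (Γ : Idx → Idx → Idx → Y → ℝ)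
    (M : Idx → Form Y p) (hM : ∀ a, IsAlt (M a)) (lam : Form Y (k + 1))
    (v : Fin (p + k + 1) → Idx) (y : Y) :
    insertF (dTheta D Γ M) lam (v ∘ Fin.cast (Nat.add_right_comm p 1 k)) y
      = (1 / ((p.factorial : ℝ) * (k.factorial : ℝ))) *
          ∑ b : Idx,
            altS (fun w => D (M b (fun i => w (Fin.castAdd k i).succ)) (w 0) y *
              lam (Fin.cons b (fun j => w (Fin.natAdd p j).succ)) y) v
        + (1 / ((p.factorial : ℝ) * (k.factorial : ℝ))) *
          ∑ b : Idx, ∑ a : Idx,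
            altS (fun w => Γ a (w 0) b y *
              (M a (fun i => w (Fin.castAdd k i).succ) y *
               lam (Fin.cons b (fun j => w (Fin.natAdd p j).succ)) y)) v := by
  have h₂ : (p+1) + k = p + k + 1 := by omega
  have h₃ : 1 + p = p + 1 := by omega
  have hpf : (p.factorial : ℝ) ≠ 0 := Nat.cast_ne_zero.mpr (Nat.factorial_ne_zero _)
  have e0 : insertF (dTheta D Γ M) lam (v ∘ Fin.cast h₂) y
      = ∑ b : Idx, (1 / (((p+1).factorial : ℝ) * (k.factorial : ℝ))) *
          altS (fun w => (dTheta D Γ M b) (w ∘ Fin.castAdd k) y *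
            contr lam b (w ∘ Fin.natAdd (p+1)) y) (v ∘ Fin.cast h₂) := by
    show (∑ b : Idx, wedge (dTheta D Γ M b) (contr lam b) (v ∘ Fin.cast h₂) y) = _
    exact Finset.sum_congr rfl fun b _ => wedge_eq_altS (dTheta D Γ M b) (contr lam b) _ y
  have ecast : (v ∘ Fin.cast (Nat.add_right_comm p 1 k)) = v ∘ Fin.cast h₂ := rfl
  rw [ecast, e0]
  -- split dTheta
  have esplit : ∀ b : Idx, ∀ w : Fin ((p+1)+k) → Idx,
      (dTheta D Γ M b) (w ∘ Fin.castAdd k) y * contr lam b (w ∘ Fin.natAdd (p+1)) y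
      = dS D (M b) (w ∘ Fin.castAdd k) y * contr lam b (w ∘ Fin.natAdd (p+1)) y
        + (∑ a : Idx, wedge (thetaOne Γ a b) (M a)
            (fun i => (w ∘ Fin.castAdd k) (Fin.cast (show 1+p = p+1 by omega) i)) y) *
          contr lam b (w ∘ Fin.natAdd (p+1)) y := by
    intro b w
    show (dS D (M b) (w ∘ Fin.castAdd k) y
        + (∑ a : Idx, wedge (thetaOne Γ a b) (M a)
            (fun i => (w ∘ Fin.castAdd k) (Fin.cast (show 1+p = p+1 by omega) i)) y)) *
      contr lam b (w ∘ Fin.natAdd (p+1)) y = _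
    rw [add_mul]
  -- part C1
  have eC1 : ∀ b : Idx,
      altS (fun w => dS D (M b) (w ∘ Fin.castAdd k) y *
          contr lam b (w ∘ Fin.natAdd (p+1)) y) (v ∘ Fin.cast h₂)
      = ((p+1).factorial : ℝ) * ((1 / (p.factorial : ℝ)) *
          altS (fun w => D (M b (fun i => w (Fin.castAdd k i).succ)) (w 0) y *
            lam (Fin.cons b (fun j => w (Fin.natAdd p j).succ)) y) v) := by
    intro b
    have hds1 : ∀ w : Fin ((p+1)+k) → Idx,
        dS D (M b) (w ∘ Fin.castAdd k) y * contr lam b (w ∘ Fin.natAdd (p+1)) y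
        = (1 / (p.factorial : ℝ)) * ∑ ρ : Perm (Fin (p+1)), sgn ρ *
            ((fun w' => D (M b (fun i : Fin p => w' (Fin.castAdd k i.succ)))
                (w' (Fin.castAdd k 0)) y *
              contr lam b (w' ∘ Fin.natAdd (p+1)) y) (w ∘ extL ρ)) := by
      intro w
      have h1 := dS_eq_altS D hD_smul (M b) (hM b) (w ∘ Fin.castAdd k) y
      have h2 : dS D (M b) (w ∘ Fin.castAdd k) y
          = (1 / (p.factorial : ℝ)) *
            altS (fun z => D (M b (z ∘ Fin.succ)) (z 0) y) (w ∘ Fin.castAdd k) := by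
        rw [h1]; field_simp
      rw [h2, mul_assoc]
      congr 1
      unfold altS
      rw [Finset.sum_mul]
      apply Finset.sum_congr rfl
      intro ρ _
      have u1 : (fun i : Fin p => (w ∘ ⇑(extL ρ)) (Fin.castAdd k i.succ))
          = ((w ∘ Fin.castAdd k) ∘ ⇑ρ) ∘ Fin.succ := by
        funext i; simp [Function.comp]
      have u2 : (w ∘ ⇑(extL ρ)) (Fin.castAdd k 0) = ((w ∘ Fin.castAdd k) ∘ ⇑ρ) 0 := by
        simp [Function.comp]
      have u3 : (w ∘ ⇑(extL ρ)) ∘ Fin.natAdd (p+1) = w ∘ Fin.natAdd (p+1) := by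
        funext j; simp [Function.comp]
      beta_reduce
      rw [u1, u2, u3]
      ring
    rw [altS_congr hds1, altS_const_mul]
    have habs := altS_absorb extL sgn_extL
      (fun w' => D (M b (fun i : Fin p => w' (Fin.castAdd k i.succ)))
          (w' (Fin.castAdd k 0)) y *
        contr lam b (w' ∘ Fin.natAdd (p+1)) y) (v ∘ Fin.cast h₂)
    rw [habs, altS_cast h₂]
    have c1 : ∀ w : Fin (p+k+1) → Idx,
        (fun i : Fin p => (w ∘ Fin.cast h₂) (Fin.castAdd k i.succ))
        = fun i => w (Fin.castAdd k i).succ := by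
      intro w; funext i
      simp only [Function.comp]
      congr 1
      all_goals (apply Fin.ext; simp)
    have c2 : ∀ w : Fin (p+k+1) → Idx,
        (w ∘ Fin.cast h₂) (Fin.castAdd k 0) = w 0 := by
      intro w
      simp only [Function.comp]
      congr 1
      all_goals (apply Fin.ext; simp)
    have c3 : ∀ w : Fin (p+k+1) → Idx,
        ((w ∘ Fin.cast h₂) ∘ Fin.natAdd (p+1)) = fun j : Fin k => w (Fin.natAdd p j).succ := by
      intro w; funext j
      simp only [Function.comp]
      congr 1
      all_goals (apply Fin.ext; simp [Nat.add_assoc, Nat.add_comm 1 _])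
    have h5 : altS (fun w => D (M b (fun i => w (Fin.castAdd k i).succ)) (w 0) y *
          lam (Fin.cons b (fun j => w (Fin.natAdd p j).succ)) y) v
        = altS (fun w => (fun w' => D (M b (fun i : Fin p => w' (Fin.castAdd k i.succ)))
              (w' (Fin.castAdd k 0)) y *
            contr lam b (w' ∘ Fin.natAdd (p+1)) y) (w ∘ Fin.cast h₂)) v := by
      apply altS_congr
      intro w
      show _ = D (M b (fun i : Fin p => (w ∘ Fin.cast h₂) (Fin.castAdd k i.succ)))
          ((w ∘ Fin.cast h₂) (Fin.castAdd k 0)) y *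
        contr lam b ((w ∘ Fin.cast h₂) ∘ Fin.natAdd (p+1)) y
      rw [c1 w, c2 w, c3 w]
      rfl
    rw [h5, mul_left_comm]
  -- part C2
  have eC2 : ∀ b : Idx,
      altS (fun w => (∑ a : Idx, wedge (thetaOne Γ a b) (M a)
            (fun i => (w ∘ Fin.castAdd k) (Fin.cast (show 1+p = p+1 by omega) i)) y) *
          contr lam b (w ∘ Fin.natAdd (p+1)) y) (v ∘ Fin.cast h₂)
      = ((1+p).factorial : ℝ) * ((1 / (((1:ℕ).factorial : ℝ) * (p.factorial : ℝ))) *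
          ∑ a : Idx, altS (fun w => Γ a (w 0) b y *
            (M a (fun i => w (Fin.castAdd k i).succ) y *
             lam (Fin.cons b (fun j => w (Fin.natAdd p j).succ)) y)) v) := by
    intro b
    have hC2 : ∀ w : Fin ((p+1)+k) → Idx,
        (∑ a : Idx, wedge (thetaOne Γ a b) (M a)
            (fun i => (w ∘ Fin.castAdd k) (Fin.cast (show 1+p = p+1 by omega) i)) y) *
          contr lam b (w ∘ Fin.natAdd (p+1)) y
        = ∑ a : Idx, (1 / (((1:ℕ).factorial : ℝ) * (p.factorial : ℝ))) *
            ∑ ρ : Perm (Fin (1+p)), sgn ρ *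
              ((fun w' => Γ a (w' (Fin.castAdd k
                    (Fin.cast (show 1+p = p+1 by omega) (Fin.castAdd p 0)))) b y *
                 (M a (fun i : Fin p => w' (Fin.castAdd k
                    (Fin.cast (show 1+p = p+1 by omega) (Fin.natAdd 1 i)))) y *
                  contr lam b (w' ∘ Fin.natAdd (p+1)) y)) (w ∘ ext2 ρ)) := by
      intro w
      rw [Finset.sum_mul]
      apply Finset.sum_congr rfl
      intro a _
      rw [wedge_eq_altS, mul_assoc]
      congr 1
      unfold altS
      rw [Finset.sum_mul]
      apply Finset.sum_congr rfl
      intro ρ _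
      simp only [thetaOne, contr, Function.comp, ext2_castAdd, ext2_natAdd]
      have m1 : ((fun i => w (Fin.castAdd k (Fin.cast (show 1+p = p+1 by omega) i))) ∘ ⇑ρ) ∘ Fin.natAdd 1
          = fun i : Fin p => w (Fin.castAdd k (Fin.cast (show 1+p = p+1 by omega) (ρ (Fin.natAdd 1 i)))) := rfl
      have m2 : (w ∘ ⇑(ext2 ρ)) ∘ Fin.natAdd (p+1) = w ∘ Fin.natAdd (p+1) := by
        funext j; simp [Function.comp, ext2_natAdd]
      rw [m1, m2]
      ring
    rw [altS_congr hC2, altS_sum]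
    rw [Finset.mul_sum, Finset.mul_sum]
    apply Finset.sum_congr rfl
    intro a _
    rw [altS_const_mul]
    have habs := altS_absorb ext2 sgn_ext2
      (fun w' => Γ a (w' (Fin.castAdd k
            (Fin.cast (show 1+p = p+1 by omega) (Fin.castAdd p 0)))) b y *
         (M a (fun i : Fin p => w' (Fin.castAdd k
            (Fin.cast (show 1+p = p+1 by omega) (Fin.natAdd 1 i)))) y *
          contr lam b (w' ∘ Fin.natAdd (p+1)) y)) (v ∘ Fin.cast h₂)
    rw [habs, altS_cast h₂]
    have g1 : ∀ w : Fin (p+k+1) → Idx,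
        (w ∘ Fin.cast h₂) (Fin.castAdd k
          (Fin.cast (show 1+p = p+1 by omega) (Fin.castAdd p 0))) = w 0 := by
      intro w
      simp only [Function.comp]
      congr 1
      all_goals (apply Fin.ext; simp)
    have g2 : ∀ w : Fin (p+k+1) → Idx,
        (fun i : Fin p => (w ∘ Fin.cast h₂) (Fin.castAdd k
          (Fin.cast (show 1+p = p+1 by omega) (Fin.natAdd 1 i))))
        = fun i => w (Fin.castAdd k i).succ := by
      intro w; funext i
      simp only [Function.comp]
      congr 1
      all_goals (apply Fin.ext; simp [Nat.add_comm 1 _])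
    have g3 : ∀ w : Fin (p+k+1) → Idx,
        ((w ∘ Fin.cast h₂) ∘ Fin.natAdd (p+1)) = fun j : Fin k => w (Fin.natAdd p j).succ := by
      intro w; funext j
      simp only [Function.comp]
      congr 1
      all_goals (apply Fin.ext; simp [Nat.add_assoc, Nat.add_comm 1 _])
    have h6 : altS (fun w => Γ a (w 0) b y *
          (M a (fun i => w (Fin.castAdd k i).succ) y *
           lam (Fin.cons b (fun j => w (Fin.natAdd p j).succ)) y)) v
        = altS (fun w => (fun w' => Γ a (w' (Fin.castAdd k
              (Fin.cast (show 1+p = p+1 by omega) (Fin.castAdd p 0)))) b y *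
            (M a (fun i : Fin p => w' (Fin.castAdd k
              (Fin.cast (show 1+p = p+1 by omega) (Fin.natAdd 1 i)))) y *
             contr lam b (w' ∘ Fin.natAdd (p+1)) y)) (w ∘ Fin.cast h₂)) v := by
      apply altS_congr
      intro w
      show _ = Γ a ((w ∘ Fin.cast h₂) (Fin.castAdd k
            (Fin.cast (show 1+p = p+1 by omega) (Fin.castAdd p 0)))) b y *
          (M a (fun i : Fin p => (w ∘ Fin.cast h₂) (Fin.castAdd k
            (Fin.cast (show 1+p = p+1 by omega) (Fin.natAdd 1 i)))) y *
           contr lam b ((w ∘ Fin.cast h₂) ∘ Fin.natAdd (p+1)) y)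
      rw [g1 w, g2 w, g3 w]
      rfl
    rw [h6, mul_left_comm]
  -- assemble
  have hsplit2 : ∀ b : Idx,
      altS (fun w => (dTheta D Γ M b) (w ∘ Fin.castAdd k) y *
          contr lam b (w ∘ Fin.natAdd (p+1)) y) (v ∘ Fin.cast h₂)
      = altS (fun w => dS D (M b) (w ∘ Fin.castAdd k) y *
          contr lam b (w ∘ Fin.natAdd (p+1)) y) (v ∘ Fin.cast h₂)
        + altS (fun w => (∑ a : Idx, wedge (thetaOne Γ a b) (M a)
            (fun i => (w ∘ Fin.castAdd k) (Fin.cast (show 1+p = p+1 by omega) i)) y) *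
          contr lam b (w ∘ Fin.natAdd (p+1)) y) (v ∘ Fin.cast h₂) := by
    intro b
    rw [← altS_add]
    exact altS_congr (esplit b) _
  rw [Finset.sum_congr rfl fun b _ => by rw [hsplit2 b, eC1 b, eC2 b]]
  have hfac1 : (((p+1)).factorial : ℝ) ≠ 0 := Nat.cast_ne_zero.mpr (Nat.factorial_ne_zero _)
  have hfacteq : (((1+p)).factorial : ℝ) = (((p+1)).factorial : ℝ) := by rw [Nat.add_comm]
  have hper : ∀ b : Idx,
      (1 / (((p+1).factorial : ℝ) * (k.factorial : ℝ))) *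
        (((p+1).factorial : ℝ) * ((1 / (p.factorial : ℝ)) *
            altS (fun w => D (M b (fun i => w (Fin.castAdd k i).succ)) (w 0) y *
              lam (Fin.cons b (fun j => w (Fin.natAdd p j).succ)) y) v)
          + ((1+p).factorial : ℝ) * ((1 / (((1:ℕ).factorial : ℝ) * (p.factorial : ℝ))) *
            ∑ a : Idx, altS (fun w => Γ a (w 0) b y *
              (M a (fun i => w (Fin.castAdd k i).succ) y *
               lam (Fin.cons b (fun j => w (Fin.natAdd p j).succ)) y)) v))
      = (1 / ((p.factorial : ℝ) * (k.factorial : ℝ))) *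
          altS (fun w => D (M b (fun i => w (Fin.castAdd k i).succ)) (w 0) y *
            lam (Fin.cons b (fun j => w (Fin.natAdd p j).succ)) y) v
        + (1 / ((p.factorial : ℝ) * (k.factorial : ℝ))) *
          ∑ a : Idx, altS (fun w => Γ a (w 0) b y *
            (M a (fun i => w (Fin.castAdd k i).succ) y *
             lam (Fin.cons b (fun j => w (Fin.natAdd p j).succ)) y)) v := by
    intro b
    rw [hfacteq, Nat.factorial_one, Nat.cast_one, one_mul]
    field_simp
  rw [Finset.sum_congr rfl fun b _ => hper b, Finset.sum_add_distrib,
    ← Finset.mul_sum, ← Finset.mul_sum]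

end MainPieces

/-- If `∇` is a metric connection and `λ` a `k`-form with
`∇λ = 0`, then the Nijenhuis–Lie derivative of `λ` along `M ∈ Λ^p(Y,TY)` is
`L_M(λ) = [d, i_M](λ) = i_{d_θ M}(λ)`, with `θ_a{}^b = Γ_{ac}{}^b dx^c`. -/
theorem nijenhuis_lie_of_parallel_form {Y : Type}
    (D : (Y → ℝ) → Idx → Y → ℝ)
    (hD_add : ∀ (f g : Y → ℝ) (a : Idx), D (f + g) a = D f a + D g a)
    (hD_mul : ∀ (f g : Y → ℝ) (a : Idx), D (f * g) a = f * D g a + g * D f a)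
    (hD_smul : ∀ (c : ℝ) (f : Y → ℝ) (a : Idx), D (c • f) a = c • D f a)
    (Γ : Idx → Idx → Idx → Y → ℝ)
    (g : Idx → Idx → Y → ℝ)
    (hg_symm : ∀ a b, g a b = g b a)
    (hmetric : ∀ (a b c : Idx),
      D (g b c) a - (fun y => ∑ e : Idx, (Γ a b e y * g e c y + Γ a c e y * g b e y)) = 0)
    (p k : ℕ) (M : Idx → Form Y p) (hM : ∀ a, IsAlt (M a))
    (lam : Form Y (k + 1)) (hlam : IsAlt lam)
    (hpar : ∀ a : Idx, covD D Γ a lam = 0) :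
    dS D (insertF M lam)
      + ((-1 : ℝ) ^ p) •
          castF (show p + (k + 1) = (p + k) + 1 by omega) (insertF M (dS D lam))
      = castF (show (p + 1) + k = (p + k) + 1 by omega)
          (insertF (dTheta D Γ M) lam) := by
  funext v y
  have hL := pieceA D hD_add hD_mul hD_smul M lam v y
  have hBB := pieceB D hD_smul Γ M lam hlam hpar v y
  have hC := pieceC D hD_add hD_smul Γ M hM lam v y
  show dS D (insertF M lam) v y
      + ((-1:ℝ)^p) * insertF M (dS D lam)
          (v ∘ Fin.cast (show p + (k+1) = p + k + 1 by omega)) y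
    = insertF (dTheta D Γ M) lam
        (v ∘ Fin.cast (show (p+1) + k = p + k + 1 by omega)) y
  rw [hL, hBB, hC]
  have hYZ : ∀ a : Idx,
      altS (fun w => lam (Fin.cons a (fun j => w (Fin.natAdd p j).succ)) y *
        D (M a (fun i => w (Fin.castAdd k i).succ)) (w 0) y) v
      = altS (fun w => D (M a (fun i => w (Fin.castAdd k i).succ)) (w 0) y *
        lam (Fin.cons a (fun j => w (Fin.natAdd p j).succ)) y) v := by
    intro a
    exact altS_congr (fun w => mul_comm _ _) v
  have hswap : (∑ a : Idx, ∑ b : Idx,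
      altS (fun w => Γ a (w 0) b y *
        (M a (fun i => w (Fin.castAdd k i).succ) y *
         lam (Fin.cons b (fun j => w (Fin.natAdd p j).succ)) y)) v)
      = ∑ b : Idx, ∑ a : Idx,
      altS (fun w => Γ a (w 0) b y *
        (M a (fun i => w (Fin.castAdd k i).succ) y *
         lam (Fin.cons b (fun j => w (Fin.natAdd p j).succ)) y)) v :=
    Finset.sum_comm
  rw [Finset.sum_congr rfl fun a _ => by rw [hYZ a], hswap, Finset.sum_add_distrib]
  ring

end
end G2S
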